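/- A finitely generated group G with more than one end (i.e., a Cayley graph of G with respect to a finite generating set has more than one end) has a non-trivial action on a tree with finite edge stabilizers. -/

import Mathlib

open Set

universe u

def cobound {V : Type*} (G : SimpleGraph V) (A : Set V) : Set (Sym2 V) :=
  {e | e ∈ G.edgeSet ∧ ∃ u v, e = s(u, v) ∧ u ∈ A ∧ v ∉ A}

def IsCut {V : Type*} (G : SimpleGraph V) (A : Set V) : Prop := (cobound G A).Finite

structure IsRay {V : Type*} (G : SimpleGraph V) (r : ℕ → V) : Prop where
  inj : Function.Injective r
  adj : ∀ n, G.Adj (r n) (r (n + 1))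

/-- The Cayley graph of `G` with respect to a finite generating set `S`. -/
def cayley {G : Type u} [Group G] (S : Finset G) : SimpleGraph G where
  Adj x y := x ≠ y ∧ ∃ s ∈ S, y = x * s ∨ x = y * s
  symm := by
    constructor
    rintro x y ⟨h, s, hs, h2⟩
    exact ⟨h.symm, s, hs, h2.symm⟩
  loopless := ⟨fun x h => h.1 rfl⟩

set_option linter.unusedSectionVars false
namespace StallingsProof

variable {G : Type u} [Group G]

/-! ### Basic facts about the Cayley graph and translations -/

lemma adj_mul {S : Finset G} {g x y : G} (h : (cayley S).Adj x y) :
    (cayley S).Adj (g * x) (g * y) := by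
  obtain ⟨hne, s, hs, h2⟩ := h
  refine ⟨fun hc => hne (mul_left_cancel hc), s, hs, ?_⟩
  rcases h2 with h2 | h2
  · exact Or.inl (by rw [h2, mul_assoc])
  · exact Or.inr (by rw [h2, mul_assoc])

/-- Left translation of a vertex set. -/
def tr (g : G) (A : Set G) : Set G := (fun v => g⁻¹ * v) ⁻¹' A

lemma mem_tr {g v : G} {A : Set G} : v ∈ tr g A ↔ g⁻¹ * v ∈ A := Iff.rfl

lemma tr_compl (g : G) (A : Set G) : tr g Aᶜ = (tr g A)ᶜ := rfl

lemma tr_inter (g : G) (A B : Set G) : tr g (A ∩ B) = tr g A ∩ tr g B := rfl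

lemma tr_one (A : Set G) : tr 1 A = A := by
  ext v; simp [mem_tr]

lemma tr_mul (g h : G) (A : Set G) : tr (g * h) A = tr g (tr h A) := by
  ext v; simp [mem_tr, mul_assoc]

lemma tr_eq_image (g : G) (A : Set G) : tr g A = (fun v => g * v) '' A := by
  ext v
  constructor
  · intro hv; exact ⟨g⁻¹ * v, hv, by group⟩
  · rintro ⟨a, ha, rfl⟩; simpa [mem_tr] using ha

lemma tr_subset_tr {g : G} {A B : Set G} (h : A ⊆ B) : tr g A ⊆ tr g B :=
  fun _ hv => h hv

lemma tr_infinite {g : G} {A : Set G} (h : A.Infinite) : (tr g A).Infinite := by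
  rw [tr_eq_image]
  exact h.image (Set.injOn_of_injective (mul_right_injective g))

lemma mem_tr_iff {g v : G} {A : Set G} : v ∈ tr g A ↔ ∃ a ∈ A, v = g * a := by
  constructor
  · intro hv; exact ⟨g⁻¹ * v, hv, by group⟩
  · rintro ⟨a, ha, rfl⟩; simpa [mem_tr] using ha

lemma tr_empty_iff {g : G} {A : Set G} : tr g A = ∅ ↔ A = ∅ := by
  constructor
  · intro h
    ext a; simp only [mem_empty_iff_false, iff_false]
    intro ha
    have : g * a ∈ tr g A := by rw [mem_tr]; simpa using ha
    simp [h] at this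
  · intro h; rw [h]; rfl

lemma tr_subset_iff {g : G} {A B : Set G} : tr g A ⊆ tr g B ↔ A ⊆ B := by
  constructor
  · intro h a ha
    have : g * a ∈ tr g A := by rw [mem_tr]; simpa using ha
    have := h this
    rwa [mem_tr, inv_mul_cancel_left] at this
  · exact tr_subset_tr

lemma tr_eq_tr_iff {g : G} {A B : Set G} : tr g A = tr g B ↔ A = B := by
  constructor
  · intro h
    exact subset_antisymm (tr_subset_iff.mp h.le) (tr_subset_iff.mp h.ge)
  · rintro rfl; rfl

/-! ### cobound basics -/

variable {S : Finset G}

lemma mem_cobound {A : Set G} {u v : G} :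
    s(u, v) ∈ cobound (cayley S) A ↔
      (cayley S).Adj u v ∧ ((u ∈ A ∧ v ∉ A) ∨ (v ∈ A ∧ u ∉ A)) := by
  constructor
  · rintro ⟨he, a, b, hab, ha, hb⟩
    rw [SimpleGraph.mem_edgeSet] at he
    refine ⟨he, ?_⟩
    rcases Sym2.eq_iff.mp hab with ⟨rfl, rfl⟩ | ⟨rfl, rfl⟩
    · exact Or.inl ⟨ha, hb⟩
    · exact Or.inr ⟨ha, hb⟩
  · rintro ⟨hadj, h | h⟩
    · exact ⟨((cayley S).mem_edgeSet).mpr hadj, u, v, rfl, h.1, h.2⟩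
    · exact ⟨((cayley S).mem_edgeSet).mpr hadj, v, u, Sym2.eq_swap, h.1, h.2⟩

lemma adj_cross {A : Set G} {x y : G} (h : (cayley S).Adj x y) (hx : x ∈ A) (hy : y ∉ A) :
    s(x, y) ∈ cobound (cayley S) A :=
  ⟨h, x, y, rfl, hx, hy⟩

lemma cobound_compl (A : Set G) : cobound (cayley S) Aᶜ = cobound (cayley S) A := by
  ext e
  induction e with
  | _ u v =>
    rw [mem_cobound, mem_cobound]
    simp only [mem_compl_iff, not_not]
    tauto

lemma cobound_mono_endpoints {A : Set G} {u v : G} (h : s(u,v) ∈ cobound (cayley S) A)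
    (hu : u ∈ A) : v ∉ A := by
  rw [mem_cobound] at h
  rcases h.2 with ⟨_, hv⟩ | ⟨_, hv⟩
  · exact hv
  · exact absurd hu hv

lemma cobound_tr (g : G) (A : Set G) :
    cobound (cayley S) (tr g A) = Sym2.map (fun v => g * v) '' cobound (cayley S) A := by
  have key : ∀ (h : G) (B : Set G) (u v : G), s(u,v) ∈ cobound (cayley S) B →
      s(h * u, h * v) ∈ cobound (cayley S) (tr h B) := by
    intro h B u v hm
    rw [mem_cobound] at hm ⊢
    refine ⟨adj_mul hm.1, ?_⟩
    have m1 : ∀ w : G, w ∈ B ↔ h * w ∈ tr h B := by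
      intro w; rw [mem_tr, inv_mul_cancel_left]
    rcases hm.2 with ⟨h1, h2⟩ | ⟨h1, h2⟩
    · exact Or.inl ⟨(m1 u).mp h1, fun hc => h2 ((m1 v).mpr hc)⟩
    · exact Or.inr ⟨(m1 v).mp h1, fun hc => h2 ((m1 u).mpr hc)⟩
  ext e
  induction e with
  | _ u v =>
    constructor
    · intro hm
      refine ⟨s(g⁻¹ * u, g⁻¹ * v), ?_, by simp⟩
      have := key g⁻¹ (tr g A) u v hm
      rwa [← tr_mul, inv_mul_cancel, tr_one] at this
    · rintro ⟨e', he', hmap⟩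
      induction e' with
      | _ a b =>
        simp only [Sym2.map_pair_eq] at hmap
        rcases Sym2.eq_iff.mp hmap with ⟨rfl, rfl⟩ | ⟨rfl, rfl⟩
        · exact key g A a b he'
        · have := key g A a b he'
          rwa [Sym2.eq_swap] at this

lemma cobound_tr_ncard (g : G) (A : Set G) :
    (cobound (cayley S) (tr g A)).ncard = (cobound (cayley S) A).ncard := by
  rw [cobound_tr]
  exact Set.ncard_image_of_injective _ (Sym2.map.injective (mul_right_injective g))

lemma cobound_tr_finite {g : G} {A : Set G} (h : (cobound (cayley S) A).Finite) :
    (cobound (cayley S) (tr g A)).Finite := by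
  rw [cobound_tr]; exact h.image _


/-! ### Connectivity of the Cayley graph -/

/-- Left multiplication as a graph homomorphism. -/
def mulHom (S : Finset G) (a : G) : (cayley S) →g (cayley S) :=
  ⟨fun v => a * v, fun h => adj_mul h⟩

@[simp] lemma mulHom_apply (S : Finset G) (a v : G) : mulHom S a v = a * v := rfl

lemma reachable_one (hgen : Subgroup.closure (S : Set G) = ⊤) (x : G) :
    (cayley S).Reachable 1 x := by
  have hx : x ∈ Subgroup.closure (S : Set G) := by rw [hgen]; trivial
  induction hx using Subgroup.closure_induction with
  | mem y hy =>
    by_cases h1 : y = 1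
    · rw [h1]
    · have hadj : (cayley S).Adj 1 y := by
        refine ⟨fun hc => h1 hc.symm, y, hy, Or.inl (one_mul y).symm⟩
      exact hadj.reachable
  | one => rfl
  | mul a b _ _ ha hb =>
    refine ha.trans ?_
    have := hb.map (mulHom S a)
    simpa using this
  | inv a _ ha =>
    have := (ha.map (mulHom S a⁻¹)).symm
    simpa using this

lemma cayley_preconnected (hgen : Subgroup.closure (S : Set G) = ⊤) :
    (cayley S).Preconnected := by
  intro x y
  have h1 : (cayley S).Reachable 1 (x⁻¹ * y) := reachable_one hgen _
  have := h1.map (mulHom S x)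
  simpa using this

/-- Local finiteness: the neighbour set of any vertex is finite. -/
lemma nbr_finite (x : G) : {y | (cayley S).Adj x y}.Finite := by
  have hsub : {y | (cayley S).Adj x y} ⊆
      ((fun s => x * s) '' (S : Set G)) ∪ ((fun s => x * s⁻¹) '' (S : Set G)) := by
    rintro y ⟨hne, s, hs, hy | hy⟩
    · exact Or.inl ⟨s, hs, hy.symm⟩
    · refine Or.inr ⟨s, hs, ?_⟩
      rw [hy]; group
  exact (((S.finite_toSet).image _).union ((S.finite_toSet).image _)).subset hsub

/-! ### Connectivity inside a set of vertices -/

/-- Adjacent and both endpoints in `A`. -/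
def Rel (S : Finset G) (A : Set G) (x y : G) : Prop :=
  (cayley S).Adj x y ∧ x ∈ A ∧ y ∈ A

/-- `x` and `y` are joined by a path inside `A`. -/
def InC (S : Finset G) (A : Set G) (x y : G) : Prop :=
  Relation.ReflTransGen (Rel S A) x y

/-- `A` is connected (as an induced subgraph); trivially true for `∅`. -/
def Conn (S : Finset G) (A : Set G) : Prop :=
  ∀ ⦃x⦄, x ∈ A → ∀ ⦃y⦄, y ∈ A → InC S A x y

lemma rel_symm {A : Set G} : Symmetric (Rel S A) := by
  rintro x y ⟨h, hx, hy⟩; exact ⟨h.symm, hy, hx⟩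

lemma inC_symm {A : Set G} {x y : G} (h : InC S A x y) : InC S A y x :=
  by haveI : Std.Symm (Rel S A) := ⟨fun _ _ h' => rel_symm h'⟩; exact Relation.ReflTransGen.symmetric.symm _ _ h

lemma inC_trans {A : Set G} {x y z : G} (h : InC S A x y) (h' : InC S A y z) :
    InC S A x z := h.trans h'

lemma inC_mono {A B : Set G} (hAB : A ⊆ B) {x y : G} (h : InC S A x y) :
    InC S B x y := by
  induction h with
  | refl => exact Relation.ReflTransGen.refl
  | tail _ hstep ih =>
    exact ih.tail ⟨hstep.1, hAB hstep.2.1, hAB hstep.2.2⟩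

/-- A path inside `F` from inside `A` to outside `A` crosses an edge of the
coboundary of `A` lying inside `F`. -/
lemma crossing {A F : Set G} {x y : G} (h : InC S F x y) (hx : x ∈ A) (hy : y ∉ A) :
    ∃ u v, (cayley S).Adj u v ∧ u ∈ F ∧ v ∈ F ∧ u ∈ A ∧ v ∉ A := by
  induction h with
  | refl => exact absurd hx hy
  | @tail b c _ hstep ih =>
    by_cases hb : b ∈ A
    · exact ⟨b, c, hstep.1, hstep.2.1, hstep.2.2, hb, hy⟩
    · exact ih hb

lemma reachable_inC_univ {x y : G} (h : (cayley S).Reachable x y) :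
    InC S univ x y := by
  rw [SimpleGraph.reachable_iff_reflTransGen] at h
  induction h with
  | refl => exact Relation.ReflTransGen.refl
  | tail _ hstep ih => exact ih.tail ⟨hstep, trivial, trivial⟩

/-- In a connected graph, any nonempty proper subset has nonempty coboundary. -/
lemma cobound_nonempty (hgen : Subgroup.closure (S : Set G) = ⊤) {A : Set G}
    (hA : A.Nonempty) (hA' : Aᶜ.Nonempty) : (cobound (cayley S) A).Nonempty := by
  obtain ⟨x, hx⟩ := hA
  obtain ⟨y, hy⟩ := hA'
  have h := reachable_inC_univ (cayley_preconnected hgen x y)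
  obtain ⟨u, v, hadj, -, -, hu, hv⟩ := crossing h hx hy
  exact ⟨s(u, v), adj_cross hadj hu hv⟩

/-! ### Components -/

/-- The connected component of `a` inside `A`. -/
def comp (S : Finset G) (A : Set G) (a : G) : Set G := {v | InC S A a v}

lemma mem_comp_self (A : Set G) (a : G) : a ∈ comp S A a := Relation.ReflTransGen.refl

lemma comp_subset {A : Set G} {a : G} (ha : a ∈ A) : comp S A a ⊆ A := by
  intro v hv
  induction hv with
  | refl => exact ha
  | tail _ hstep _ => exact hstep.2.2

lemma comp_eq_of_mem {A : Set G} {a b : G} (hb : b ∈ comp S A a) :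
    comp S A a = comp S A b := by
  ext v
  exact ⟨fun hv => inC_trans (inC_symm hb) hv, fun hv => inC_trans hb hv⟩

lemma comp_extend {A : Set G} {a u v : G} (hu : u ∈ comp S A a)
    (hadj : (cayley S).Adj u v) (hvA : v ∈ A) (huA : u ∈ A) : v ∈ comp S A a :=
  Relation.ReflTransGen.tail hu ⟨hadj, huA, hvA⟩

lemma cobound_comp_subset {A : Set G} {a : G} (ha : a ∈ A) :
    cobound (cayley S) (comp S A a) ⊆ cobound (cayley S) A := by
  intro e he
  induction e with
  | _ u v =>
    rw [mem_cobound] at he ⊢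
    refine ⟨he.1, ?_⟩
    have main : ∀ p q : G, (cayley S).Adj p q → p ∈ comp S A a → q ∉ comp S A a →
        p ∈ A ∧ q ∉ A := by
      intro p q hpq hp hq
      refine ⟨comp_subset ha hp, fun hc => hq ?_⟩
      exact comp_extend hp hpq hc (comp_subset ha hp)
    rcases he.2 with ⟨h1, h2⟩ | ⟨h1, h2⟩
    · exact Or.inl (main u v he.1 h1 h2)
    · exact Or.inr (main v u he.1.symm h1 h2)

/-- Endpoints of a set of edges. -/
def endpts (E : Set (Sym2 G)) : Set G := {v | ∃ e ∈ E, v ∈ e}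

lemma endpts_finite {E : Set (Sym2 G)} (hE : E.Finite) : (endpts E).Finite := by
  have : endpts E = ⋃ e ∈ E, {v | v ∈ e} := by
    ext v; simp [endpts]
  rw [this]
  refine hE.biUnion fun e _ => ?_
  induction e with
  | _ a b =>
    have heq : {v | v ∈ s(a,b)} = {a, b} := by
      ext v; simp [Sym2.mem_iff]
    rw [heq]
    exact (finite_singleton b).insert a

/-- If `A` is infinite with finite coboundary (and `Aᶜ` nonempty), some component
of `A` is infinite. -/
lemma exists_infinite_comp (hgen : Subgroup.closure (S : Set G) = ⊤) {A : Set G}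
    (hA : A.Infinite) (hA' : Aᶜ.Nonempty) (hb : (cobound (cayley S) A).Finite) :
    ∃ a ∈ A, (comp S A a).Infinite := by
  classical
  set EP := endpts (cobound (cayley S) A) with hEP
  have hEPfin : EP.Finite := endpts_finite hb
  have hcover : ∀ y ∈ A, ∃ u ∈ EP, y ∈ comp S A u := by
    intro y hy
    have h1 : (comp S A y).Nonempty := ⟨y, mem_comp_self A y⟩
    have h2 : (comp S A y)ᶜ.Nonempty := by
      obtain ⟨z, hz⟩ := hA'
      exact ⟨z, fun hc => hz (comp_subset hy hc)⟩
    obtain ⟨e, he⟩ := cobound_nonempty hgen h1 h2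
    have heA : e ∈ cobound (cayley S) A := cobound_comp_subset hy he
    obtain ⟨-, p, q, rfl, hp, hq⟩ := he
    refine ⟨p, ⟨s(p,q), heA, by simp⟩, ?_⟩
    rw [← comp_eq_of_mem hp]
    exact mem_comp_self A y
  by_contra hcon
  push_neg at hcon
  have hsub : A ⊆ ⋃ u ∈ EP ∩ A, comp S A u := by
    intro y hy
    obtain ⟨u, hu, hyu⟩ := hcover y hy
    have huA : u ∈ A := by
      have := comp_subset hy (inC_symm hyu)
      exact this
    exact mem_biUnion ⟨hu, huA⟩ hyu
  have : (⋃ u ∈ EP ∩ A, comp S A u).Finite := by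
    refine (hEPfin.inter_of_left A).biUnion fun u hu => ?_
    by_contra hinf
    exact absurd (hcon u hu.2) (by simpa [Set.not_infinite] using hinf)
  exact hA (this.subset hsub)


/-! ### The minimal cut size `kk` and minimal cuts `Mm` -/

/-- A good set: both sides infinite, finite coboundary. -/
def Good (S : Finset G) (A : Set G) : Prop :=
  A.Infinite ∧ Aᶜ.Infinite ∧ (cobound (cayley S) A).Finite

/-- The minimal size of the coboundary of a good set. -/
noncomputable def kk (S : Finset G) : ℕ :=
  sInf ((fun Y => (cobound (cayley S) Y).ncard) '' {Y | Good S Y})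

/-- Minimal cuts. -/
def Mm (S : Finset G) (A : Set G) : Prop :=
  Good S A ∧ (cobound (cayley S) A).ncard = kk S

lemma good_compl {A : Set G} (h : Good S A) : Good S Aᶜ :=
  ⟨h.2.1, by rw [compl_compl]; exact h.1, by rw [cobound_compl]; exact h.2.2⟩

lemma good_tr {A : Set G} (g : G) (h : Good S A) : Good S (tr g A) := by
  refine ⟨tr_infinite h.1, ?_, cobound_tr_finite h.2.2⟩
  rw [← tr_compl]
  exact tr_infinite h.2.1

lemma mm_compl {A : Set G} (h : Mm S A) : Mm S Aᶜ :=
  ⟨good_compl h.1, by rw [cobound_compl]; exact h.2⟩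

lemma mm_tr {A : Set G} (g : G) (h : Mm S A) : Mm S (tr g A) :=
  ⟨good_tr g h.1, by rw [cobound_tr_ncard]; exact h.2⟩

lemma kk_le {A : Set G} (h : Good S A) : kk S ≤ (cobound (cayley S) A).ncard :=
  Nat.sInf_le ⟨A, h, rfl⟩

lemma mm_exists (hex : ∃ A, Good S A) : ∃ A, Mm S A := by
  obtain ⟨A, hA⟩ := hex
  have hne : ((fun Y => (cobound (cayley S) Y).ncard) '' {Y | Good S Y}).Nonempty :=
    ⟨_, ⟨A, hA, rfl⟩⟩
  obtain ⟨Y, hY, hYk⟩ := Nat.sInf_mem hne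
  exact ⟨Y, hY, hYk⟩

lemma kk_pos (hgen : Subgroup.closure (S : Set G) = ⊤) (hex : ∃ A, Good S A) :
    1 ≤ kk S := by
  obtain ⟨A, hA⟩ := mm_exists hex
  rw [← hA.2]
  have hne := cobound_nonempty hgen hA.1.1.nonempty hA.1.2.1.nonempty
  exact (Set.ncard_pos hA.1.2.2).mpr hne

/-- Lemma T: a minimal cut is connected, as is its complement. -/
lemma mm_conn (hgen : Subgroup.closure (S : Set G) = ⊤) {A : Set G} (h : Mm S A) :
    Conn S A := by
  classical
  obtain ⟨a, haA, hainf⟩ := exists_infinite_comp hgen h.1.1 h.1.2.1.nonempty h.1.2.2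
  set U := comp S A a with hU
  have hUgood : Good S U := by
    refine ⟨hainf, ?_, h.1.2.2.subset (cobound_comp_subset haA)⟩
    exact h.1.2.1.mono (compl_subset_compl.mpr (comp_subset haA))
  have hle : (cobound (cayley S) A).ncard ≤ (cobound (cayley S) U).ncard := by
    rw [h.2]; exact kk_le hUgood
  have hbeq : cobound (cayley S) U = cobound (cayley S) A :=
    Set.eq_of_subset_of_ncard_le (cobound_comp_subset haA) hle h.1.2.2
  -- now show A ⊆ U
  have hAU : A ⊆ U := by
    intro y hy
    by_contra hyU
    -- the component of y has a boundary edge, which lies in cobound A = cobound U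
    have h1 : (comp S A y).Nonempty := ⟨y, mem_comp_self A y⟩
    have h2 : (comp S A y)ᶜ.Nonempty := by
      obtain ⟨z, hz⟩ := h.1.2.1.nonempty
      exact ⟨z, fun hc => hz (comp_subset hy hc)⟩
    obtain ⟨e, he⟩ := cobound_nonempty hgen h1 h2
    have heA : e ∈ cobound (cayley S) A := cobound_comp_subset hy he
    have heU : e ∈ cobound (cayley S) U := by rw [hbeq]; exact heA
    obtain ⟨-, p, q, hepq, hp, hq⟩ := he
    subst hepq
    have hpA : p ∈ A := comp_subset hy hp
    have hqA : q ∉ A := cobound_mono_endpoints heA hpA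
    obtain ⟨-, p', q', hepq', hp', hq'⟩ := heU
    have hp'A : p' ∈ A := comp_subset haA hp'
    rcases Sym2.eq_iff.mp hepq' with ⟨h1', h2'⟩ | ⟨h1', h2'⟩
    · -- p' = p ∈ U ∩ comp y
      have hpU : p ∈ U := by rw [h1']; exact hp'
      have : comp S A y = U := by
        rw [comp_eq_of_mem hp, hU, comp_eq_of_mem hpU]
      exact hyU (this ▸ mem_comp_self A y)
    · -- p' = q ∉ A, contradiction
      exact hqA (by rw [h2']; exact hp'A)
  -- conclude connectivity
  intro x hx y' hy'
  exact inC_trans (inC_symm (hAU hx)) (hAU hy')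


/-! ### Submodularity of the coboundary -/

lemma cobound_inter_subset (A B : Set G) :
    cobound (cayley S) (A ∩ B) ⊆ cobound (cayley S) A ∪ cobound (cayley S) B := by
  intro e he
  induction e with
  | _ u v =>
    rw [mem_cobound] at he
    simp only [Set.mem_union, mem_cobound, Set.mem_inter_iff, not_and_or] at he ⊢
    tauto

lemma cobound_union_subset (A B : Set G) :
    cobound (cayley S) (A ∪ B) ⊆ cobound (cayley S) A ∪ cobound (cayley S) B := by
  intro e he
  induction e with
  | _ u v =>
    rw [mem_cobound] at he
    simp only [Set.mem_union, mem_cobound, not_or] at he ⊢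
    tauto

lemma cobound_inter_inter_subset (A B : Set G) :
    cobound (cayley S) (A ∩ B) ∩ cobound (cayley S) (A ∪ B) ⊆
      cobound (cayley S) A ∩ cobound (cayley S) B := by
  intro e he
  induction e with
  | _ u v =>
    obtain ⟨h1, h2⟩ := he
    rw [mem_cobound] at h1 h2
    simp only [Set.mem_inter_iff, mem_cobound, Set.mem_union, not_or, not_and_or] at h1 h2 ⊢
    tauto

lemma submod {A B : Set G} (hA : (cobound (cayley S) A).Finite)
    (hB : (cobound (cayley S) B).Finite) :
    (cobound (cayley S) (A ∩ B)).ncard + (cobound (cayley S) (A ∪ B)).ncard ≤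
      (cobound (cayley S) A).ncard + (cobound (cayley S) B).ncard := by
  have hIf : (cobound (cayley S) (A ∩ B)).Finite :=
    (hA.union hB).subset (cobound_inter_subset A B)
  have hUf : (cobound (cayley S) (A ∪ B)).Finite :=
    (hA.union hB).subset (cobound_union_subset A B)
  rw [← Set.ncard_union_add_ncard_inter _ _ hIf hUf,
      ← Set.ncard_union_add_ncard_inter _ _ hA hB]
  have h1 : (cobound (cayley S) (A ∩ B) ∪ cobound (cayley S) (A ∪ B)).ncard ≤
      (cobound (cayley S) A ∪ cobound (cayley S) B).ncard := by
    refine Set.ncard_le_ncard ?_ (hA.union hB)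
    exact Set.union_subset (cobound_inter_subset A B) (cobound_union_subset A B)
  have h2 : (cobound (cayley S) (A ∩ B) ∩ cobound (cayley S) (A ∪ B)).ncard ≤
      (cobound (cayley S) A ∩ cobound (cayley S) B).ncard := by
    refine Set.ncard_le_ncard (cobound_inter_inter_subset A B) (hA.inter_of_left _)
  omega

/-! ### Corners of two minimal cuts -/

lemma corner_mm {C D : Set G} (hC : Mm S C) (hD : Mm S D)
    (hP : (C ∩ D).Infinite) (hQ : (Cᶜ ∩ Dᶜ).Infinite) :
    Mm S (C ∩ D) ∧ Mm S (C ∪ D) := by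
  have hfin : (cobound (cayley S) (C ∩ D)).Finite :=
    (hC.1.2.2.union hD.1.2.2).subset (cobound_inter_subset C D)
  have hfin' : (cobound (cayley S) (C ∪ D)).Finite :=
    (hC.1.2.2.union hD.1.2.2).subset (cobound_union_subset C D)
  have hPg : Good S (C ∩ D) := by
    refine ⟨hP, ?_, hfin⟩
    rw [Set.compl_inter]
    exact hC.1.2.1.mono (Set.subset_union_left)
  have hQg : Good S (C ∪ D) := by
    refine ⟨hC.1.1.mono Set.subset_union_left, ?_, hfin'⟩
    rw [Set.compl_union]
    exact hQ
  have h1 := kk_le hPg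
  have h2 := kk_le hQg
  have h3 := submod hC.1.2.2 hD.1.2.2
  rw [hC.2, hD.2] at h3
  constructor
  · exact ⟨hPg, by omega⟩
  · exact ⟨hQg, by omega⟩

/-! ### Nestedness -/

def Nested (A B : Set G) : Prop :=
  A ∩ B = ∅ ∨ A ∩ Bᶜ = ∅ ∨ Aᶜ ∩ B = ∅ ∨ Aᶜ ∩ Bᶜ = ∅

lemma inter_empty_iff {A B : Set G} : A ∩ B = ∅ ↔ A ⊆ Bᶜ := by
  constructor
  · intro h x hx hxB
    have : x ∈ A ∩ B := ⟨hx, hxB⟩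
    rw [h] at this
    exact this
  · intro h
    ext x
    simp only [Set.mem_inter_iff, Set.mem_empty_iff_false, iff_false]
    rintro ⟨hx, hxB⟩
    exact h hx hxB

lemma nested_iff {A B : Set G} :
    Nested A B ↔ A ⊆ Bᶜ ∨ A ⊆ B ∨ B ⊆ A ∨ Bᶜ ⊆ A := by
  unfold Nested
  constructor
  · rintro (h | h | h | h)
    · exact Or.inl (inter_empty_iff.mp h)
    · refine Or.inr (Or.inl ?_)
      have := inter_empty_iff.mp h
      rwa [compl_compl] at this
    · refine Or.inr (Or.inr (Or.inl ?_))
      have := inter_empty_iff.mp h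
      rwa [Set.compl_subset_compl] at this
    · refine Or.inr (Or.inr (Or.inr ?_))
      have := inter_empty_iff.mp h
      rw [compl_compl] at this
      rwa [Set.compl_subset_comm] at this
  · rintro (h | h | h | h)
    · exact Or.inl (inter_empty_iff.mpr h)
    · refine Or.inr (Or.inl (inter_empty_iff.mpr ?_))
      rwa [compl_compl]
    · refine Or.inr (Or.inr (Or.inl (inter_empty_iff.mpr ?_)))
      rwa [Set.compl_subset_compl]
    · refine Or.inr (Or.inr (Or.inr (inter_empty_iff.mpr ?_)))
      rw [compl_compl]
      rwa [Set.compl_subset_comm]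

lemma nested_symm {A B : Set G} (h : Nested A B) : Nested B A := by
  rw [nested_iff] at h ⊢
  rcases h with h | h | h | h
  · exact Or.inl (Set.subset_compl_comm.mp h)
  · exact Or.inr (Or.inr (Or.inl h))
  · exact Or.inr (Or.inl h)
  · exact Or.inr (Or.inr (Or.inr (Set.compl_subset_comm.mp h)))

lemma nested_compl_left {A B : Set G} (h : Nested A B) : Nested Aᶜ B := by
  unfold Nested at h ⊢
  rw [compl_compl]
  tauto

lemma nested_compl_right {A B : Set G} (h : Nested A B) : Nested A Bᶜ := by
  unfold Nested at h ⊢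
  rw [compl_compl]
  tauto

lemma nested_self (A : Set G) : Nested A A :=
  Or.inr (Or.inl (by simp))

lemma nested_compl_self (A : Set G) : Nested A Aᶜ :=
  Or.inl (by simp)

lemma nested_tr {g : G} {A B : Set G} (h : Nested A B) : Nested (tr g A) (tr g B) := by
  unfold Nested at h ⊢
  rw [← tr_compl, ← tr_compl, ← tr_inter, ← tr_inter, ← tr_inter, ← tr_inter,
    tr_empty_iff, tr_empty_iff, tr_empty_iff, tr_empty_iff]
  exact h

/-- The set of minimal cuts not nested with `A`. -/
def NN (S : Finset G) (A : Set G) : Set (Set G) := {B | Mm S B ∧ ¬ Nested A B}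

noncomputable def ww (S : Finset G) (A : Set G) : ℕ := (NN S A).ncard

/-- Optimal cuts: minimal cuts minimizing the number of minimal cuts
not nested with them. -/
def Opt (S : Finset G) (A : Set G) : Prop :=
  Mm S A ∧ ∀ B, Mm S B → ww S A ≤ ww S B

lemma nn_compl (A : Set G) : NN S Aᶜ = NN S A := by
  ext B
  simp only [NN, Set.mem_setOf_eq, and_congr_right_iff]
  intro _
  constructor
  · intro h hc; exact h (nested_compl_left hc)
  · intro h hc
    exact h (by have := nested_compl_left hc; rwa [compl_compl] at this)

lemma ww_compl (A : Set G) : ww S Aᶜ = ww S A := by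
  unfold ww; rw [nn_compl]

lemma opt_compl {A : Set G} (h : Opt S A) : Opt S Aᶜ :=
  ⟨mm_compl h.1, fun B hB => by rw [ww_compl]; exact h.2 B hB⟩

lemma nn_tr (g : G) (A : Set G) : NN S (tr g A) = tr g '' NN S A := by
  ext B
  simp only [NN, Set.mem_setOf_eq, Set.mem_image]
  constructor
  · intro ⟨hB, hnn⟩
    refine ⟨tr g⁻¹ B, ⟨mm_tr _ hB, fun hc => hnn ?_⟩, by rw [← tr_mul, mul_inv_cancel, tr_one]⟩
    have := nested_tr (g := g) hc
    rwa [← tr_mul, mul_inv_cancel, tr_one] at this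
  · rintro ⟨B', ⟨hB', hnn⟩, rfl⟩
    refine ⟨mm_tr _ hB', fun hc => hnn ?_⟩
    have := nested_tr (g := g⁻¹) hc
    rwa [← tr_mul, ← tr_mul, inv_mul_cancel, tr_one, tr_one] at this

lemma tr_injective (g : G) : Function.Injective (tr (G := G) g) := by
  intro A B h
  rw [← tr_eq_tr_iff (g := g)]
  exact h

lemma ww_tr (g : G) (A : Set G) : ww S (tr g A) = ww S A := by
  unfold ww
  rw [nn_tr]
  exact Set.ncard_image_of_injective _ (tr_injective g)

lemma opt_tr {A : Set G} (g : G) (h : Opt S A) : Opt S (tr g A) := by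
  refine ⟨mm_tr g h.1, fun B hB => ?_⟩
  rw [ww_tr]
  have : Mm S (tr g⁻¹ B) := mm_tr _ hB
  have h2 := h.2 _ this
  rwa [ww_tr] at h2


/-! ### Determination of a minimal cut by its coboundary -/

def RelE (S : Finset G) (E' : Set (Sym2 G)) (x y : G) : Prop :=
  (cayley S).Adj x y ∧ s(x, y) ∉ E'

def compE (S : Finset G) (E' : Set (Sym2 G)) (a : G) : Set G :=
  {v | Relation.ReflTransGen (RelE S E') a v}

lemma edge_not_in_cobound_of_both_mem {D : Set G} {x y : G} (hx : x ∈ D) (hy : y ∈ D) :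
    s(x, y) ∉ cobound (cayley S) D := by
  intro h
  rw [mem_cobound] at h
  rcases h.2 with ⟨-, h2⟩ | ⟨-, h2⟩
  · exact h2 hy
  · exact h2 hx

lemma mm_determined (hgen : Subgroup.closure (S : Set G) = ⊤) {D : Set G} {a : G}
    (hD : Mm S D) (ha : a ∈ D) : D = compE S (cobound (cayley S) D) a := by
  apply subset_antisymm
  · intro x hx
    have hpath : InC S D a x := mm_conn hgen hD ha hx
    unfold compE
    simp only [Set.mem_setOf_eq]
    clear hx
    induction hpath with
    | refl => exact Relation.ReflTransGen.refl
    | tail _ hstep ih =>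
      exact ih.tail ⟨hstep.1, edge_not_in_cobound_of_both_mem hstep.2.1 hstep.2.2⟩
  · intro v hv
    simp only [compE, Set.mem_setOf_eq] at hv
    induction hv with
    | refl => exact ha
    | @tail b c _ hstep ih =>
      by_contra hc
      exact hstep.2 (adj_cross hstep.1 ih hc)

/-! ### Lemma A': finiteness of separating minimal cuts -/

lemma mm_sep_finite (hgen : Subgroup.closure (S : Set G) = ⊤) (a b : G) :
    {D : Set G | Mm S D ∧ a ∈ D ∧ b ∉ D}.Finite := by
  classical
  by_contra hinf
  have hinf' : {D : Set G | Mm S D ∧ a ∈ D ∧ b ∉ D}.Infinite := hinf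
  set 𝒟 := {D : Set G | Mm S D ∧ a ∈ D ∧ b ∉ D} with h𝒟
  haveI : Infinite ↥𝒟 := hinf'.to_subtype
  set U : Ultrafilter ↥𝒟 := Filter.hyperfilter ↥𝒟 with hUdef
  set Dinf : Set G := {v | {d : ↥𝒟 | v ∈ (d : Set G)} ∈ U} with hDinf
  have hmem : ∀ v : G, v ∈ Dinf ↔ {d : ↥𝒟 | v ∈ (d : Set G)} ∈ U := fun v => Iff.rfl
  have hnotmem : ∀ v : G, v ∉ Dinf ↔ {d : ↥𝒟 | v ∉ (d : Set G)} ∈ U := by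
    intro v
    rw [hmem]
    rw [← Ultrafilter.compl_mem_iff_notMem]
    have : {d : ↥𝒟 | v ∈ (d : Set G)}ᶜ = {d : ↥𝒟 | v ∉ (d : Set G)} := rfl
    rw [this]
  have ha_inf : a ∈ Dinf := by
    rw [hmem]
    have : {d : ↥𝒟 | a ∈ (d : Set G)} = Set.univ := by
      ext d; simpa using d.2.2.1
    rw [this]; exact Filter.univ_mem
  have hb_inf : b ∉ Dinf := by
    rw [hnotmem]
    have : {d : ↥𝒟 | b ∉ (d : Set G)} = Set.univ := by
      ext d; simpa using d.2.2.2
    rw [this]; exact Filter.univ_mem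
  -- each edge of the coboundary of Dinf is in the coboundary of U-most cuts
  have hedge : ∀ e ∈ cobound (cayley S) Dinf,
      {d : ↥𝒟 | e ∈ cobound (cayley S) (d : Set G)} ∈ U := by
    intro e he
    induction e with
    | _ u v =>
      rw [mem_cobound] at he
      obtain ⟨hadj, hor⟩ := he
      rcases hor with ⟨h1, h2⟩ | ⟨h1, h2⟩
      · rw [hmem] at h1; rw [hnotmem] at h2
        refine Filter.mem_of_superset (Filter.inter_mem h1 h2) ?_
        rintro d ⟨hd1, hd2⟩
        exact adj_cross hadj hd1 hd2
      · rw [hmem] at h1; rw [hnotmem] at h2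
        refine Filter.mem_of_superset (Filter.inter_mem h1 h2) ?_
        rintro d ⟨hd1, hd2⟩
        have := adj_cross hadj.symm hd1 hd2
        rwa [Sym2.eq_swap] at this
  -- any finite subset of cobound Dinf has at most kk elements
  have hbound : ∀ E' : Set (Sym2 G), E' ⊆ cobound (cayley S) Dinf → E'.Finite →
      E'.ncard ≤ kk S := by
    intro E' hsub hfin
    have hU : (⋂ e ∈ E', {d : ↥𝒟 | e ∈ cobound (cayley S) (d : Set G)}) ∈ U :=
      (Filter.biInter_mem hfin).mpr fun e he => hedge e (hsub he)
    obtain ⟨d, hd⟩ := Ultrafilter.nonempty_of_mem hU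
    simp only [Set.mem_iInter] at hd
    have hsubd : E' ⊆ cobound (cayley S) (d : Set G) := fun e he => hd e he
    calc E'.ncard ≤ (cobound (cayley S) (d : Set G)).ncard :=
          Set.ncard_le_ncard hsubd d.2.1.1.2.2
      _ = kk S := d.2.1.2
  have hcofin : (cobound (cayley S) Dinf).Finite := by
    by_contra hc
    have hc' : (cobound (cayley S) Dinf).Infinite := hc
    obtain ⟨t, hts, htfin, htn⟩ := hc'.exists_subset_ncard_eq (kk S + 1)
    have := hbound t hts htfin
    omega
  have hconcard : (cobound (cayley S) Dinf).ncard ≤ kk S :=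
    hbound _ (le_refl _) hcofin
  -- Dinf is infinite
  have hDinf_inf : Dinf.Infinite := by
    by_contra hfin
    rw [Set.not_infinite] at hfin
    set N : Set G := Dinf ∪ {v | ∃ u ∈ Dinf, (cayley S).Adj u v} with hN
    have hNfin : N.Finite := by
      refine hfin.union ?_
      have : {v | ∃ u ∈ Dinf, (cayley S).Adj u v} = ⋃ u ∈ Dinf, {v | (cayley S).Adj u v} := by
        ext v; simp
      rw [this]
      exact hfin.biUnion fun u _ => nbr_finite u
    have hagree : {d : ↥𝒟 | ∀ v ∈ N, (v ∈ (d : Set G) ↔ v ∈ Dinf)} ∈ U := by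
      have : {d : ↥𝒟 | ∀ v ∈ N, (v ∈ (d : Set G) ↔ v ∈ Dinf)} =
          ⋂ v ∈ N, {d : ↥𝒟 | v ∈ (d : Set G) ↔ v ∈ Dinf} := by
        ext d; simp
      rw [this]
      refine (Filter.biInter_mem hNfin).mpr fun v _ => ?_
      by_cases hv : v ∈ Dinf
      · refine Filter.mem_of_superset ((hmem v).mp hv) ?_
        intro d hd; simp only [Set.mem_setOf_eq] at hd ⊢; exact ⟨fun _ => hv, fun _ => hd⟩
      · refine Filter.mem_of_superset ((hnotmem v).mp hv) ?_
        intro d hd; simp only [Set.mem_setOf_eq] at hd ⊢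
        exact ⟨fun hc => absurd hc hd, fun hc => absurd hc hv⟩
    obtain ⟨d, hd⟩ := Ultrafilter.nonempty_of_mem hagree
    obtain ⟨w, hwD, hwN⟩ : ∃ w ∈ (d : Set G), w ∉ N := by
      by_contra hc
      push_neg at hc
      exact d.2.1.1.1 (hNfin.subset hc)
    have hpath : InC S (d : Set G) a w := mm_conn hgen d.2.1 d.2.2.1 hwD
    have hwinf : w ∉ Dinf := fun hc => hwN (Or.inl hc)
    obtain ⟨u, v, hadj, huD, hvD, huI, hvI⟩ := crossing hpath ha_inf hwinf
    have hvN : v ∈ N := Or.inr ⟨u, huI, hadj⟩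
    exact hvI ((hd v hvN).mp hvD)
  -- Dinfᶜ is infinite
  have hDinfc_inf : Dinfᶜ.Infinite := by
    by_contra hfin
    rw [Set.not_infinite] at hfin
    set N : Set G := Dinfᶜ ∪ {v | ∃ u ∈ Dinfᶜ, (cayley S).Adj u v} with hN
    have hNfin : N.Finite := by
      refine hfin.union ?_
      have : {v | ∃ u ∈ Dinfᶜ, (cayley S).Adj u v} = ⋃ u ∈ Dinfᶜ, {v | (cayley S).Adj u v} := by
        ext v; simp
      rw [this]
      exact hfin.biUnion fun u _ => nbr_finite u
    have hagree : {d : ↥𝒟 | ∀ v ∈ N, (v ∈ (d : Set G) ↔ v ∈ Dinf)} ∈ U := by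
      have : {d : ↥𝒟 | ∀ v ∈ N, (v ∈ (d : Set G) ↔ v ∈ Dinf)} =
          ⋂ v ∈ N, {d : ↥𝒟 | v ∈ (d : Set G) ↔ v ∈ Dinf} := by
        ext d; simp
      rw [this]
      refine (Filter.biInter_mem hNfin).mpr fun v _ => ?_
      by_cases hv : v ∈ Dinf
      · refine Filter.mem_of_superset ((hmem v).mp hv) ?_
        intro d hd; simp only [Set.mem_setOf_eq] at hd ⊢; exact ⟨fun _ => hv, fun _ => hd⟩
      · refine Filter.mem_of_superset ((hnotmem v).mp hv) ?_
        intro d hd; simp only [Set.mem_setOf_eq] at hd ⊢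
        exact ⟨fun hc => absurd hc hd, fun hc => absurd hc hv⟩
    obtain ⟨d, hd⟩ := Ultrafilter.nonempty_of_mem hagree
    obtain ⟨w, hwD, hwN⟩ : ∃ w ∈ (d : Set G)ᶜ, w ∉ N := by
      by_contra hc
      push_neg at hc
      exact d.2.1.1.2.1 (hNfin.subset hc)
    have hbD : b ∈ (d : Set G)ᶜ := d.2.2.2
    have hpath : InC S (d : Set G)ᶜ b w := mm_conn hgen (mm_compl d.2.1) hbD hwD
    have hwinf : w ∉ Dinfᶜ := fun hc => hwN (Or.inl hc)
    obtain ⟨u, v, hadj, huD, hvD, huI, hvI⟩ := crossing hpath hb_inf hwinf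
    have hvN : v ∈ N := Or.inr ⟨u, huI, hadj⟩
    have : v ∈ (d : Set G) ↔ v ∈ Dinf := hd v hvN
    rw [Set.mem_compl_iff, not_not] at hvI
    exact hvD (this.mpr hvI)
  -- Dinf is a minimal cut
  have hDinfGood : Good S Dinf := ⟨hDinf_inf, hDinfc_inf, hcofin⟩
  have hDinfMm : Mm S Dinf := ⟨hDinfGood, le_antisymm hconcard (kk_le hDinfGood)⟩
  -- U-most cuts have coboundary exactly cobound Dinf, hence are all equal
  have hsame : {d : ↥𝒟 | cobound (cayley S) ((d : Set G)) = cobound (cayley S) Dinf} ∈ U := by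
    have hU : (⋂ e ∈ cobound (cayley S) Dinf,
        {d : ↥𝒟 | e ∈ cobound (cayley S) (d : Set G)}) ∈ U :=
      (Filter.biInter_mem hcofin).mpr fun e he => hedge e he
    refine Filter.mem_of_superset hU ?_
    intro d hd
    simp only [Set.mem_iInter] at hd
    have hsubd : cobound (cayley S) Dinf ⊆ cobound (cayley S) (d : Set G) :=
      fun e he => hd e he
    have : cobound (cayley S) Dinf = cobound (cayley S) (d : Set G) := by
      refine Set.eq_of_subset_of_ncard_le hsubd ?_ d.2.1.1.2.2
      rw [d.2.1.2, hDinfMm.2]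
    exact this.symm
  have hdet : {d : ↥𝒟 | (d : Set G) = compE S (cobound (cayley S) Dinf) a} ∈ U := by
    refine Filter.mem_of_superset hsame ?_
    intro d hd
    simp only [Set.mem_setOf_eq] at hd ⊢
    have := mm_determined hgen d.2.1 d.2.2.1
    rw [hd] at this
    exact this
  have hfin2 : {d : ↥𝒟 | (d : Set G) = compE S (cobound (cayley S) Dinf) a}.Finite := by
    apply Set.Subsingleton.finite
    intro d hd d' hd'
    exact Subtype.ext (hd.trans hd'.symm)
  exact Filter.notMem_hyperfilter_of_finite hfin2 hdet


/-! ### Finiteness of the set of minimal cuts not nested with a given one -/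

lemma not_nested_corners {C D : Set G} (h : ¬ Nested C D) :
    (C ∩ D).Nonempty ∧ (C ∩ Dᶜ).Nonempty ∧ (Cᶜ ∩ D).Nonempty ∧ (Cᶜ ∩ Dᶜ).Nonempty := by
  unfold Nested at h
  push_neg at h
  exact h

lemma nn_finite (hgen : Subgroup.closure (S : Set G) = ⊤) {C : Set G} (hC : Mm S C) :
    (NN S C).Finite := by
  classical
  set EP := endpts (cobound (cayley S) C) with hEPdef
  have hEP : EP.Finite := endpts_finite hC.1.2.2
  have hsub : NN S C ⊆ ⋃ p ∈ EP, ⋃ q ∈ EP, {D : Set G | Mm S D ∧ p ∈ D ∧ q ∉ D} := by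
    rintro D ⟨hD, hnn⟩
    obtain ⟨hX, hU, hW, hZ⟩ := not_nested_corners (fun hc => hnn (nested_symm hc))
    -- corners of (D, C)
    obtain ⟨x1, hx1⟩ := hX
    obtain ⟨y1, hy1⟩ := hU
    have hpath1 : InC S D x1 y1 := mm_conn hgen hD hx1.1 hy1.1
    obtain ⟨u, v, hadj, huD, hvD, huC, hvC⟩ := crossing hpath1 hx1.2 (fun hc => hy1.2 hc)
    obtain ⟨x2, hx2⟩ := hW
    obtain ⟨y2, hy2⟩ := hZ
    have hpath2 : InC S Dᶜ x2 y2 := mm_conn hgen (mm_compl hD) hx2.1 hy2.1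
    obtain ⟨u', v', hadj', huD', hvD', huC', hvC'⟩ :=
      crossing hpath2 hx2.2 (fun hc => hy2.2 hc)
    have hu_ep : u ∈ EP := ⟨s(u, v), adj_cross hadj huC hvC, by simp⟩
    have hu'_ep : u' ∈ EP := ⟨s(u', v'), adj_cross hadj' huC' hvC', by simp⟩
    refine Set.mem_biUnion hu_ep ?_
    refine Set.mem_biUnion hu'_ep ?_
    exact ⟨hD, huD, huD'⟩
  exact ((hEP.biUnion fun p _ => hEP.biUnion fun q _ => mm_sep_finite hgen p q).subset hsub)

/-! ### Optimal cuts are pairwise nested -/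

lemma opt_exists (hex : ∃ A, Good S A) : ∃ A, Opt S A := by
  obtain ⟨A₀, hA₀⟩ := mm_exists hex
  have hne : (ww S '' {A | Mm S A}).Nonempty := ⟨_, A₀, hA₀, rfl⟩
  obtain ⟨A, hA, hAw⟩ := Nat.sInf_mem hne
  exact ⟨A, hA, fun B hB => by rw [hAw]; exact Nat.sInf_le ⟨B, hB, rfl⟩⟩

lemma nested_corner {C D F : Set G} (hnn : ¬ Nested C D)
    (h1 : Nested C F) (h2 : Nested D F) : Nested (C ∩ D) F := by
  obtain ⟨-, -, hW, hZ⟩ := not_nested_corners hnn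
  rw [nested_iff] at h1 h2 ⊢
  rcases h1 with h1 | h1 | h1 | h1
  · exact Or.inl (Set.inter_subset_left.trans h1)
  · exact Or.inr (Or.inl (Set.inter_subset_left.trans h1))
  · rcases h2 with h2 | h2 | h2 | h2
    · exact Or.inl (Set.inter_subset_right.trans h2)
    · exact Or.inr (Or.inl (Set.inter_subset_right.trans h2))
    · exact Or.inr (Or.inr (Or.inl (Set.subset_inter h1 h2)))
    · -- F ⊆ C, Fᶜ ⊆ D : then Cᶜ ⊆ Fᶜ ⊆ D, contradicting Cᶜ ∩ Dᶜ ≠ ∅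
      exfalso
      obtain ⟨z, hz1, hz2⟩ := hZ
      exact hz2 (h2 (fun hc => hz1 (h1 hc)))
  · rcases h2 with h2 | h2 | h2 | h2
    · -- Fᶜ ⊆ C, D ⊆ Fᶜ : D ⊆ C, contradicting Cᶜ ∩ D ≠ ∅
      exfalso
      obtain ⟨z, hz1, hz2⟩ := hW
      exact hz1 (h1 (h2 hz2))
    · exact Or.inr (Or.inl (Set.inter_subset_right.trans h2))
    · -- Fᶜ ⊆ C, F ⊆ D : Cᶜ ⊆ F ⊆ D, contradicting Cᶜ ∩ Dᶜ ≠ ∅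
      exfalso
      obtain ⟨z, hz1, hz2⟩ := hZ
      exact hz2 (h2 (by by_contra hc; exact hz1 (h1 hc)))
    · exact Or.inr (Or.inr (Or.inr (Set.subset_inter h1 h2)))

lemma nested_diag {C D F : Set G} (h : Nested C F) :
    Nested (C ∩ D) F ∨ Nested (Cᶜ ∩ Dᶜ) F := by
  rw [nested_iff] at h
  rcases h with h | h | h | h
  · exact Or.inl (nested_iff.mpr (Or.inl (Set.inter_subset_left.trans h)))
  · exact Or.inl (nested_iff.mpr (Or.inr (Or.inl (Set.inter_subset_left.trans h))))
  · -- F ⊆ C : Cᶜ ∩ Dᶜ ⊆ Fᶜ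
    refine Or.inr (nested_iff.mpr (Or.inl ?_))
    intro x hx hxF
    exact hx.1 (h hxF)
  · -- Fᶜ ⊆ C : Cᶜ ∩ Dᶜ ⊆ F
    refine Or.inr (nested_iff.mpr (Or.inr (Or.inl ?_)))
    intro x hx
    by_contra hc
    exact hx.1 (h hc)

lemma opt_contra (hgen : Subgroup.closure (S : Set G) = ⊤) {C D : Set G}
    (hCo : Opt S C) (hDo : Opt S D) (hnn : ¬ Nested C D)
    (hP : (C ∩ D).Infinite) (hQ : (Cᶜ ∩ Dᶜ).Infinite) : False := by
  classical
  set P := C ∩ D with hPdef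
  set Q := Cᶜ ∩ Dᶜ with hQdef
  obtain ⟨hPM, hUM⟩ := corner_mm hCo.1 hDo.1 hP hQ
  have hQM : Mm S Q := by
    have := mm_compl hUM
    rwa [Set.compl_union] at this
  have hfC := nn_finite hgen hCo.1
  have hfD := nn_finite hgen hDo.1
  have hfP := nn_finite hgen hPM
  have hfQ := nn_finite hgen hQM
  -- L1 : union inclusion
  have L1 : NN S P ∪ NN S Q ⊆ NN S C ∪ NN S D := by
    rintro F (⟨hF, hFnn⟩ | ⟨hF, hFnn⟩) <;>
    · by_contra hc
      simp only [Set.mem_union, NN, Set.mem_setOf_eq, not_or, not_and, not_not] at hc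
      have h1 := hc.1 hF
      have h2 := hc.2 hF
      refine hFnn ?_
      first
        | exact nested_corner hnn h1 h2
        | · have hnn' : ¬ Nested Cᶜ Dᶜ := by
              intro hcc
              exact hnn (by
                have := nested_compl_left (nested_compl_right hcc)
                rwa [compl_compl, compl_compl] at this)
            exact nested_corner hnn' (nested_compl_left h1) (nested_compl_left h2)
  -- L2 : intersection inclusion
  have L2 : NN S P ∩ NN S Q ⊆ NN S C ∩ NN S D := by
    rintro F ⟨⟨hF, hFP⟩, ⟨-, hFQ⟩⟩
    constructor
    · refine ⟨hF, fun hc => ?_⟩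
      rcases nested_diag (D := D) hc with h | h
      · exact hFP h
      · exact hFQ h
    · refine ⟨hF, fun hc => ?_⟩
      rcases nested_diag (D := C) hc with h | h
      · exact hFP (by rwa [Set.inter_comm] at h)
      · exact hFQ (by rwa [Set.inter_comm] at h)
  -- C and D are in the big union but not the small one
  have hCD_ne : C ≠ D := fun hc => hnn (hc ▸ nested_self C)
  have hCmem : C ∈ NN S D := ⟨hCo.1, fun hc => hnn (nested_symm hc)⟩
  have hDmem : D ∈ NN S C := ⟨hDo.1, hnn⟩
  have hCnot : C ∉ NN S P ∪ NN S Q := by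
    rintro (⟨-, hc⟩ | ⟨-, hc⟩)
    · exact hc (nested_iff.mpr (Or.inr (Or.inl Set.inter_subset_left)))
    · exact hc (nested_iff.mpr (Or.inl Set.inter_subset_left))
  have hDnot : D ∉ NN S P ∪ NN S Q := by
    rintro (⟨-, hc⟩ | ⟨-, hc⟩)
    · exact hc (nested_iff.mpr (Or.inr (Or.inl Set.inter_subset_right)))
    · exact hc (nested_iff.mpr (Or.inl Set.inter_subset_right))
  -- counting
  have e1 : (NN S P ∪ NN S Q).ncard + (NN S P ∩ NN S Q).ncard = ww S P + ww S Q :=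
    Set.ncard_union_add_ncard_inter _ _ hfP hfQ
  have e2 : (NN S C ∪ NN S D).ncard + (NN S C ∩ NN S D).ncard = ww S C + ww S D :=
    Set.ncard_union_add_ncard_inter _ _ hfC hfD
  have m2 : (NN S P ∩ NN S Q).ncard ≤ (NN S C ∩ NN S D).ncard :=
    Set.ncard_le_ncard L2 (hfC.inter_of_left _)
  have m1 : (NN S P ∪ NN S Q).ncard + 2 ≤ (NN S C ∪ NN S D).ncard := by
    have hsub : insert C (insert D (NN S P ∪ NN S Q)) ⊆ NN S C ∪ NN S D := by
      intro F hF
      rcases hF with rfl | hF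
      · exact Or.inr hCmem
      rcases hF with rfl | hF
      · exact Or.inl hDmem
      · exact L1 hF
    have hfPQ : (NN S P ∪ NN S Q).Finite := hfP.union hfQ
    have hcard : (insert C (insert D (NN S P ∪ NN S Q))).ncard =
        (NN S P ∪ NN S Q).ncard + 2 := by
      rw [Set.ncard_insert_of_notMem (by
            rintro (rfl | hc)
            · exact hCD_ne rfl
            · exact hCnot hc) (hfPQ.insert D),
          Set.ncard_insert_of_notMem hDnot hfPQ]
    rw [← hcard]
    exact Set.ncard_le_ncard hsub (hfC.union hfD)
  have w1 : ww S C ≤ ww S P := hCo.2 _ hPM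
  have w2 : ww S D ≤ ww S Q := hDo.2 _ hQM
  omega

theorem opt_nested (hgen : Subgroup.closure (S : Set G) = ⊤) {C D : Set G}
    (hCo : Opt S C) (hDo : Opt S D) : Nested C D := by
  by_contra hnn
  obtain ⟨hX, hU, hW, hZ⟩ := not_nested_corners hnn
  by_cases hdiag : (C ∩ Dᶜ).Infinite ∧ (Cᶜ ∩ D).Infinite
  · -- apply opt_contra to C and Dᶜ
    refine opt_contra hgen hCo (opt_compl hDo) ?_ hdiag.1 (by rw [compl_compl]; exact hdiag.2)
    intro hc
    exact hnn (by
      have := nested_compl_right hc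
      rwa [compl_compl] at this)
  · -- then C ∩ D and Cᶜ ∩ Dᶜ are infinite
    have hX' : (C ∩ D).Infinite ∧ (Cᶜ ∩ Dᶜ).Infinite := by
      rw [not_and_or] at hdiag
      rcases hdiag with h | h
      · rw [Set.not_infinite] at h
        constructor
        · have hCsplit : C = (C ∩ D) ∪ (C ∩ Dᶜ) := by
            ext x; by_cases hx : x ∈ D <;> simp [hx]
          intro hc
          exact hCo.1.1.1 (by rw [hCsplit]; exact hc.union h)
        · have hsplit : Dᶜ = (C ∩ Dᶜ) ∪ (Cᶜ ∩ Dᶜ) := by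
            ext x; by_cases hx : x ∈ C <;> simp [hx]
          intro hc
          exact hDo.1.1.2.1 (by rw [hsplit]; exact h.union hc)
      · rw [Set.not_infinite] at h
        constructor
        · have hsplit : D = (C ∩ D) ∪ (Cᶜ ∩ D) := by
            ext x; by_cases hx : x ∈ C <;> simp [hx]
          intro hc
          exact hDo.1.1.1 (by rw [hsplit]; exact hc.union h)
        · have hsplit : Cᶜ = (Cᶜ ∩ D) ∪ (Cᶜ ∩ Dᶜ) := by
            ext x; by_cases hx : x ∈ D <;> simp [hx]
          intro hc
          exact hCo.1.1.2.1 (by rw [hsplit]; exact h.union hc)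
    exact opt_contra hgen hCo hDo hnn hX'.1 hX'.2


/-! ### Basic consequences for optimal cuts -/

lemma opt_val_infinite {C : Set G} (h : Opt S C) : C.Infinite := h.1.1.1
lemma opt_compl_infinite {C : Set G} (h : Opt S C) : Cᶜ.Infinite := h.1.1.2.1

lemma opt_nonempty {C : Set G} (h : Opt S C) : C.Nonempty := h.1.1.1.nonempty

lemma opt_ne_univ {C : Set G} (h : Opt S C) : C ≠ univ := by
  intro hc
  have := h.1.1.2.1
  rw [hc, compl_univ] at this
  exact this finite_empty

lemma opt_ne_compl {C : Set G} (h : Opt S C) : C ≠ Cᶜ := by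
  intro hc
  obtain ⟨x, hx⟩ := opt_nonempty h
  have : x ∈ Cᶜ := hc ▸ hx
  exact this hx

lemma not_subset_own_compl {C : Set G} (h : Opt S C) : ¬ C ⊆ Cᶜ := by
  intro hc
  obtain ⟨x, hx⟩ := opt_nonempty h
  exact hc hx hx

lemma not_compl_subset_own {C : Set G} (h : Opt S C) : ¬ Cᶜ ⊆ C := by
  intro hc
  obtain ⟨x, hx⟩ := (opt_compl_infinite h).nonempty
  exact hx (hc hx)

lemma ssub_compl_comm {A B : Set G} : A ⊂ Bᶜ ↔ B ⊂ Aᶜ := by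
  rw [Set.ssubset_iff_subset_ne, Set.ssubset_iff_subset_ne, Set.subset_compl_comm]
  constructor
  · rintro ⟨h, hne⟩
    exact ⟨h, fun hc => hne (by rw [hc, compl_compl])⟩
  · rintro ⟨h, hne⟩
    exact ⟨h, fun hc => hne (by rw [hc, compl_compl])⟩

lemma empty_of_subset_both {A B : Set G} (h1 : A ⊆ B) (h2 : A ⊆ Bᶜ) : A = ∅ := by
  ext x
  simp only [Set.mem_empty_iff_false, iff_false]
  intro hx
  exact h2 hx (h1 hx)

/-! ### The structure tree -/

/-- The type of optimal cuts. -/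
def ECut (S : Finset G) := {C : Set G // Opt S C}

/-- Two optimal cuts point away from the same vertex region. -/
def SimRel (S : Finset G) (C D : ECut S) : Prop :=
  C.val = D.val ∨
    (C.val ⊂ D.valᶜ ∧ ¬ ∃ E : Set G, Opt S E ∧ C.val ⊂ E ∧ E ⊂ D.valᶜ)

lemma simRel_refl (C : ECut S) : SimRel S C C := Or.inl rfl

lemma simRel_symm {C D : ECut S} (h : SimRel S C D) : SimRel S D C := by
  rcases h with h | ⟨h1, h2⟩
  · exact Or.inl h.symm
  · refine Or.inr ⟨ssub_compl_comm.mp h1, ?_⟩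
    rintro ⟨E, hE, hE1, hE2⟩
    have hE1' : D.val ⊂ (Eᶜ)ᶜ := by rwa [compl_compl]
    exact h2 ⟨Eᶜ, opt_compl hE, ssub_compl_comm.mp hE2, ssub_compl_comm.mp hE1'⟩

lemma simRel_trans (hgen : Subgroup.closure (S : Set G) = ⊤) {C D F : ECut S}
    (h1 : SimRel S C D) (h2 : SimRel S D F) : SimRel S C F := by
  rcases h1 with h1 | ⟨hCD, nbCD⟩
  · rcases h2 with h2 | ⟨hDF, nbDF⟩
    · exact Or.inl (h1.trans h2)
    · refine Or.inr ⟨h1 ▸ hDF, ?_⟩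
      rintro ⟨E, hE⟩
      exact nbDF ⟨E, hE.1, h1 ▸ hE.2.1, hE.2.2⟩
  · rcases h2 with h2 | ⟨hDF, nbDF⟩
    · exact Or.inr ⟨h2 ▸ hCD, fun ⟨E, hE⟩ => nbCD ⟨E, hE.1, hE.2.1, h2 ▸ hE.2.2⟩⟩
    by_cases hCF : C.val = F.val
    · exact Or.inl hCF
    refine Or.inr ⟨?_, ?_⟩
    · -- C ⊊ Fᶜ
      rcases nested_iff.mp (opt_nested hgen C.2 F.2) with h | h | h | h
      · -- C ⊆ Fᶜ ; need strictness
        rw [Set.ssubset_iff_subset_ne]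
        refine ⟨h, fun hc => ?_⟩
        -- C = Fᶜ : then D ⊊ Fᶜ = C and C ⊊ Dᶜ give D = ∅
        have hDC : D.val ⊂ C.val := hc ▸ hDF
        have : D.val = ∅ :=
          empty_of_subset_both hDC.subset (ssub_compl_comm.mp hCD).subset
        exact (opt_nonempty D.2).ne_empty this
      · -- C ⊆ F : F is between C and Dᶜ
        exfalso
        refine nbCD ⟨F.val, F.2, ?_, ?_⟩
        · exact Set.ssubset_iff_subset_ne.mpr ⟨h, hCF⟩
        · exact ssub_compl_comm.mp hDF
      · -- F ⊆ C : Cᶜ is between D and Fᶜ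
        exfalso
        refine nbDF ⟨C.valᶜ, opt_compl C.2, ssub_compl_comm.mp hCD, ?_⟩
        have hFC : F.val ⊂ C.val :=
          Set.ssubset_iff_subset_ne.mpr ⟨h, fun hc => hCF hc.symm⟩
        have hFC' : F.val ⊂ (C.valᶜ)ᶜ := by rwa [compl_compl]
        exact ssub_compl_comm.mpr hFC'
      · -- Fᶜ ⊆ C : D ⊆ F and D ⊆ Fᶜ
        exfalso
        have hDFc : D.val ⊆ F.val := by
          intro x hx
          by_contra hc
          exact (ssub_compl_comm.mp hCD).subset hx (h hc)
        exact (opt_nonempty D.2).ne_empty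
          (empty_of_subset_both hDFc hDF.subset)
    · -- no E between C and Fᶜ
      rintro ⟨E, hEopt, hCE, hEF⟩
      rcases nested_iff.mp (opt_nested hgen hEopt D.2) with h | h | h | h
      · -- E ⊆ Dᶜ
        by_cases hEDc : E = D.valᶜ
        · -- Dᶜ ⊊ Fᶜ gives F ⊊ D, together with D ⊊ Fᶜ gives F = ∅
          rw [hEDc] at hEF
          have hFD : F.val ⊂ D.val := by
            have := ssub_compl_comm.mp hEF
            rwa [compl_compl] at this
          exact (opt_nonempty F.2).ne_empty
            (empty_of_subset_both hFD.subset (ssub_compl_comm.mp hDF).subset)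
        · exact nbCD ⟨E, hEopt, hCE, Set.ssubset_iff_subset_ne.mpr ⟨h, hEDc⟩⟩
      · -- E ⊆ D : C ⊆ D and C ⊆ Dᶜ
        have hCsub : C.val ⊆ D.val := hCE.subset.trans h
        exact (opt_nonempty C.2).ne_empty
          (empty_of_subset_both hCsub hCD.subset)
      · -- D ⊆ E
        by_cases hde : D.val = E
        · -- C ⊊ D and C ⊊ Dᶜ
          rw [← hde] at hCE
          exact (opt_nonempty C.2).ne_empty
            (empty_of_subset_both hCE.subset hCD.subset)
        · exact nbDF ⟨E, hEopt, Set.ssubset_iff_subset_ne.mpr ⟨h, hde⟩, hEF⟩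
      · -- Dᶜ ⊆ E : Fᶜ ⊇ D ∪ Dᶜ = univ
        have h1 : D.val ⊆ F.valᶜ := hDF.subset
        have h2 : D.valᶜ ⊆ F.valᶜ := h.trans hEF.subset
        have : F.valᶜ = univ := by
          ext x
          simp only [Set.mem_univ, iff_true]
          by_cases hx : x ∈ D.val
          · exact h1 hx
          · exact h2 hx
        have : F.val = ∅ := by
          rw [← compl_compl F.val, this, compl_univ]
        exact (opt_nonempty F.2).ne_empty this

/-- The setoid on optimal cuts. -/
def cutSetoid (S : Finset G) : Setoid (ECut S) := Relation.EqvGen.setoid (SimRel S)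

lemma cutSetoid_r (hgen : Subgroup.closure (S : Set G) = ⊤) {C D : ECut S} :
    (cutSetoid S) C D ↔ SimRel S C D := by
  have heq : Equivalence (SimRel S) :=
    ⟨simRel_refl, fun h => simRel_symm h, fun h h' => simRel_trans hgen h h'⟩
  show Relation.EqvGen (SimRel S) C D ↔ SimRel S C D
  exact heq.eqvGen_iff

/-- Vertices of the structure tree. -/
def TV (S : Finset G) := Quotient (cutSetoid S)

/-- Complement as an operation on optimal cuts. -/
def ocompl (C : ECut S) : ECut S := ⟨C.valᶜ, opt_compl C.2⟩

lemma ocompl_ocompl (C : ECut S) : ocompl (ocompl C) = C :=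
  Subtype.ext (compl_compl C.val)

/-- The structure tree. -/
def TT (S : Finset G) : SimpleGraph (TV S) where
  Adj u v := u ≠ v ∧ ∃ C : ECut S, u = Quotient.mk (cutSetoid S) C ∧
    v = Quotient.mk (cutSetoid S) (ocompl C)
  symm := by
    constructor
    rintro u v ⟨hne, C, hu, hv⟩
    refine ⟨hne.symm, ocompl C, hv, ?_⟩
    rw [ocompl_ocompl]
    exact hu
  loopless := ⟨fun u h => h.1 rfl⟩


/-! ### Vertices and edges of the structure tree -/

def mkv (C : ECut S) : TV S := Quotient.mk (cutSetoid S) C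

lemma mkv_eq_iff (hgen : Subgroup.closure (S : Set G) = ⊤) {C D : ECut S} :
    mkv C = mkv D ↔ SimRel S C D := by
  constructor
  · intro h
    exact (cutSetoid_r hgen).mp (Quotient.exact h)
  · intro h
    exact Quotient.sound ((cutSetoid_r hgen).mpr h)

lemma class_ne_compl (hgen : Subgroup.closure (S : Set G) = ⊤) (C : ECut S) :
    mkv C ≠ mkv (ocompl C) := by
  intro h
  rcases (mkv_eq_iff hgen).mp h with h' | ⟨hss, -⟩
  · exact opt_ne_compl C.2 h'
  · rw [ocompl] at hss
    simp only [compl_compl] at hss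
    exact hss.ne rfl

lemma adj_mk (hgen : Subgroup.closure (S : Set G) = ⊤) (C : ECut S) :
    (TT S).Adj (mkv C) (mkv (ocompl C)) :=
  ⟨class_ne_compl hgen C, C, rfl, rfl⟩

/-! ### Connectivity of the structure tree -/

def Btw (S : Finset G) (C B : Set G) : Set (Set G) := {E : Set G | Opt S E ∧ C ⊆ E ∧ E ⊆ B}

lemma btw_finite (hgen : Subgroup.closure (S : Set G) = ⊤) {C B : Set G}
    (hCne : C.Nonempty) (hBne : Bᶜ.Nonempty) : (Btw S C B).Finite := by
  obtain ⟨x₀, hx₀⟩ := hCne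
  obtain ⟨y₀, hy₀⟩ := hBne
  refine (mm_sep_finite hgen x₀ y₀).subset ?_
  rintro E ⟨hE, hCE, hEB⟩
  exact ⟨hE.1, hCE hx₀, fun hc => hy₀ (hEB hc)⟩

lemma reach_aux (hgen : Subgroup.closure (S : Set G) = ⊤) :
    ∀ n : ℕ, ∀ C D : ECut S, C.val ⊆ D.valᶜ → (Btw S C.val D.valᶜ).ncard ≤ n →
      (TT S).Reachable (mkv C) (mkv D) := by
  intro n
  induction n with
  | zero =>
    intro C D h hn
    exfalso
    have hfin : (Btw S C.val D.valᶜ).Finite :=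
      btw_finite hgen (opt_nonempty C.2) (by rw [compl_compl]; exact opt_nonempty D.2)
    have hmem : D.valᶜ ∈ Btw S C.val D.valᶜ := ⟨opt_compl D.2, h, subset_rfl⟩
    have := (Set.ncard_pos hfin).mpr ⟨_, hmem⟩
    omega
  | succ n ih =>
    intro C D h hn
    by_cases hCD : C.val = D.valᶜ
    · have : mkv C = mkv (ocompl D) := congrArg _ (Subtype.ext hCD)
      rw [this]
      have hAdj := (adj_mk hgen (ocompl D)).symm
      rw [ocompl_ocompl] at hAdj
      exact hAdj.symm.reachable
    · have hss : C.val ⊂ D.valᶜ := Set.ssubset_iff_subset_ne.mpr ⟨h, hCD⟩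
      by_cases hnb : ∃ E : Set G, Opt S E ∧ C.val ⊂ E ∧ E ⊂ D.valᶜ
      · obtain ⟨E, hEopt, hCE, hED⟩ := hnb
        set Esub : ECut S := ⟨E, hEopt⟩ with hEsub
        have hfin : (Btw S C.val D.valᶜ).Finite :=
          btw_finite hgen (opt_nonempty C.2) (by rw [compl_compl]; exact opt_nonempty D.2)
        -- first recursion : C to (ocompl Esub)
        have hsub1 : Btw S C.val E ⊆ Btw S C.val D.valᶜ := by
          rintro F ⟨hF1, hF2, hF3⟩
          exact ⟨hF1, hF2, hF3.trans hED.subset⟩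
        have hne1 : D.valᶜ ∉ Btw S C.val E := by
          rintro ⟨-, -, hc⟩
          exact hED.ne (subset_antisymm hED.subset hc)
        have hlt1 : (Btw S C.val E).ncard < (Btw S C.val D.valᶜ).ncard := by
          refine Set.ncard_lt_ncard ?_ hfin
          exact ⟨hsub1, fun hc => hne1 (hc ⟨opt_compl D.2, h, subset_rfl⟩)⟩
        have hr1 : (TT S).Reachable (mkv C) (mkv (ocompl Esub)) := by
          have harg : C.val ⊆ (ocompl Esub).valᶜ := by
            show C.val ⊆ Eᶜᶜ
            rw [compl_compl]
            exact hCE.subset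
          have hmeas : (Btw S C.val (ocompl Esub).valᶜ).ncard ≤ n := by
            have : (ocompl Esub).valᶜ = E := compl_compl E
            rw [this]
            omega
          exact ih C (ocompl Esub) harg hmeas
        -- second recursion : Esub to D
        have hsub2 : Btw S E D.valᶜ ⊆ Btw S C.val D.valᶜ := by
          rintro F ⟨hF1, hF2, hF3⟩
          exact ⟨hF1, hCE.subset.trans hF2, hF3⟩
        have hne2 : C.val ∉ Btw S E D.valᶜ := by
          rintro ⟨-, hc, -⟩
          exact hCE.ne (subset_antisymm hCE.subset hc)
        have hlt2 : (Btw S E D.valᶜ).ncard < (Btw S C.val D.valᶜ).ncard := by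
          refine Set.ncard_lt_ncard ?_ hfin
          exact ⟨hsub2, fun hc => hne2 (hc ⟨C.2, subset_rfl, h⟩)⟩
        have hr2 : (TT S).Reachable (mkv Esub) (mkv D) := by
          refine ih Esub D hED.subset ?_
          show (Btw S E D.valᶜ).ncard ≤ n
          omega
        have hlink : (TT S).Reachable (mkv (ocompl Esub)) (mkv Esub) := by
          have := (adj_mk hgen Esub).symm
          exact this.reachable
        exact hr1.trans (hlink.trans hr2)
      · have hsim : SimRel S C D := Or.inr ⟨hss, hnb⟩
        rw [(mkv_eq_iff hgen).mpr hsim]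

lemma tree_preconnected (hgen : Subgroup.closure (S : Set G) = ⊤) :
    (TT S).Preconnected := by
  intro u v
  induction u using Quotient.inductionOn with
  | _ C =>
  induction v using Quotient.inductionOn with
  | _ D =>
  have reach : ∀ C' D' : ECut S, C'.val ⊆ D'.valᶜ →
      (TT S).Reachable (mkv C') (mkv D') := fun C' D' h =>
    reach_aux hgen _ C' D' h (le_refl _)
  show (TT S).Reachable (mkv C) (mkv D)
  rcases nested_iff.mp (opt_nested hgen C.2 D.2) with h | h | h | h
  · exact reach C D h
  · -- C ⊆ D
    have h1 : (TT S).Reachable (mkv C) (mkv (ocompl D)) := by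
      refine reach C (ocompl D) ?_
      show C.val ⊆ D.valᶜᶜ
      rwa [compl_compl]
    refine h1.trans ?_
    have := (adj_mk hgen (ocompl D)).reachable
    rwa [ocompl_ocompl] at this
  · -- D ⊆ C
    have h1 : (TT S).Reachable (mkv (ocompl C)) (mkv D) := by
      refine reach (ocompl C) D ?_
      intro x hx
      intro hc
      exact hx (h hc)
    exact ((adj_mk hgen C).reachable).trans h1
  · -- Dᶜ ⊆ C
    have h1 : (TT S).Reachable (mkv (ocompl C)) (mkv (ocompl D)) := by
      refine reach (ocompl C) (ocompl D) ?_
      show C.valᶜ ⊆ D.valᶜᶜ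
      rw [compl_compl]
      intro x hx
      by_contra hc
      exact hx (h hc)
    refine ((adj_mk hgen C).reachable).trans (h1.trans ?_)
    have := (adj_mk hgen (ocompl D)).reachable
    rwa [ocompl_ocompl] at this


/-! ### Acyclicity of the structure tree -/

/-- A side marker for the edge determined by `C`. -/
def Qside (C : ECut S) (w : TV S) : Prop :=
  w = mkv (ocompl C) ∨ ∃ F : ECut S, w = mkv F ∧ (F.val ⊂ C.val ∨ C.valᶜ ⊂ F.val)

lemma qside_not_self (hgen : Subgroup.closure (S : Set G) = ⊤) (C : ECut S) :
    ¬ Qside C (mkv C) := by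
  rintro (h | ⟨F, hF, hR⟩)
  · exact class_ne_compl hgen C h
  · rcases (mkv_eq_iff hgen).mp hF with hval | ⟨hss, -⟩
    · -- C.val = F.val
      rw [← hval] at hR
      rcases hR with hR | hR
      · exact hR.ne rfl
      · exact not_compl_subset_own C.2 hR.subset
    · rcases hR with hR | hR
      · exact not_subset_own_compl F.2 (hR.subset.trans hss.subset)
      · have hFC : F.val ⊆ C.valᶜ := (ssub_compl_comm.mp hss).subset
        exact hR.ne (subset_antisymm hR.subset hFC)

lemma qside_step (hgen : Subgroup.closure (S : Set G) = ⊤) {C D : ECut S}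
    (hDC : D.val ≠ C.val) (hDCc : D.val ≠ C.valᶜ)
    (h : Qside C (mkv D)) : Qside C (mkv (ocompl D)) := by
  have flip1 : ∀ {A B : Set G}, A ⊂ B → Bᶜ ⊂ Aᶜ := by
    intro A B hAB
    have : A ⊂ (Bᶜ)ᶜ := by rwa [compl_compl]
    exact ssub_compl_comm.mp this
  rcases h with h | ⟨F, hF, hR⟩
  · -- mkv D = mkv (ocompl C)
    rcases (mkv_eq_iff hgen).mp h with hval | ⟨hss, -⟩
    · exact absurd hval hDCc
    · have hDsubC : D.val ⊂ C.val := by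
        have : (ocompl C).valᶜ = C.val := compl_compl C.val
        rwa [this] at hss
      exact Or.inr ⟨ocompl D, rfl, Or.inr (flip1 hDsubC)⟩
  · rcases (mkv_eq_iff hgen).mp hF with hval | ⟨hss, hnb⟩
    · -- D.val = F.val : R holds for D itself
      rw [← hval] at hR
      rcases hR with hR | hR
      · exact Or.inr ⟨ocompl D, rfl, Or.inr (flip1 hR)⟩
      · refine Or.inr ⟨ocompl D, rfl, Or.inl ?_⟩
        have := flip1 hR
        rwa [compl_compl] at this
    · by_cases hRD : (D.val ⊂ C.val ∨ C.valᶜ ⊂ D.val)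
      · rcases hRD with hR' | hR'
        · exact Or.inr ⟨ocompl D, rfl, Or.inr (flip1 hR')⟩
        · refine Or.inr ⟨ocompl D, rfl, Or.inl ?_⟩
          have := flip1 hR'
          rwa [compl_compl] at this
      · exfalso
        -- D ⊂ Cᶜ or C ⊂ D
        have hdisj : D.val ⊂ C.valᶜ ∨ C.val ⊂ D.val := by
          rcases nested_iff.mp (opt_nested hgen D.2 C.2) with h' | h' | h' | h'
          · exact Or.inl (Set.ssubset_iff_subset_ne.mpr ⟨h', hDCc⟩)
          · exact absurd (Or.inl (Set.ssubset_iff_subset_ne.mpr ⟨h', hDC⟩)) hRD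
          · exact Or.inr (Set.ssubset_iff_subset_ne.mpr ⟨h', fun hc => hDC hc.symm⟩)
          · exact absurd (Or.inr (Set.ssubset_iff_subset_ne.mpr
              ⟨h', fun hc => hDCc hc.symm⟩)) hRD
        rcases hdisj with hD1 | hD2
        · rcases hR with hRF | hRF
          · -- F ⊂ C : Cᶜ is between D and Fᶜ
            refine hnb ⟨C.valᶜ, opt_compl C.2, hD1, ?_⟩
            have : F.val ⊂ (C.valᶜ)ᶜ := by rwa [compl_compl]
            exact ssub_compl_comm.mpr this
          · -- Cᶜ ⊂ F : D ⊆ F and D ⊆ Fᶜ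
            have h1 : D.val ⊆ F.val := hD1.subset.trans hRF.subset
            exact (opt_nonempty D.2).ne_empty
              (empty_of_subset_both h1 hss.subset)
        · rcases hR with hRF | hRF
          · -- F ⊂ C ⊂ D and D ⊂ Fᶜ
            have h1 : F.val ⊆ D.val := hRF.subset.trans hD2.subset
            exact not_subset_own_compl F.2 (h1.trans hss.subset)
          · -- Cᶜ ⊂ F, F ⊂ Dᶜ ⊂ Cᶜ
            have h1 : F.val ⊆ C.valᶜ :=
              (ssub_compl_comm.mp hss).subset.trans (flip1 hD2).subset
            exact hRF.ne (subset_antisymm hRF.subset h1)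

lemma qside_iff (hgen : Subgroup.closure (S : Set G) = ⊤) {C D : ECut S}
    (hDC : D.val ≠ C.val) (hDCc : D.val ≠ C.valᶜ) :
    (Qside C (mkv D) ↔ Qside C (mkv (ocompl D))) := by
  constructor
  · exact qside_step hgen hDC hDCc
  · intro h
    have h1 : (ocompl D).val ≠ C.val := by
      intro hc
      apply hDCc
      rw [← hc, ocompl]
      simp
    have h2 : (ocompl D).val ≠ C.valᶜ := by
      intro hc
      apply hDC
      have := congrArg compl hc
      rw [ocompl] at this
      simpa using this
    have := qside_step hgen h1 h2 h
    rwa [ocompl_ocompl] at this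

lemma tree_bridge (hgen : Subgroup.closure (S : Set G) = ⊤) (C : ECut S) :
    ¬ ((TT S) \ SimpleGraph.fromEdgeSet {s(mkv C, mkv (ocompl C))}).Reachable
      (mkv C) (mkv (ocompl C)) := by
  intro h
  have key : ∀ (u v : TV S),
      ((TT S) \ SimpleGraph.fromEdgeSet {s(mkv C, mkv (ocompl C))}).Reachable u v →
      (Qside C u ↔ Qside C v) := by
    intro u v huv
    obtain ⟨p⟩ := huv
    induction p with
    | nil => exact Iff.rfl
    | @cons a b c hadj p ih =>
      refine Iff.trans ?_ ih
      rw [SimpleGraph.sdiff_adj] at hadj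
      obtain ⟨⟨hne, D, ha, hb⟩, hnotin⟩ := hadj
      rw [SimpleGraph.fromEdgeSet_adj] at hnotin
      have hpair : s(a, b) ≠ s(mkv C, mkv (ocompl C)) := by
        intro hc
        exact hnotin ⟨by rw [hc]; exact rfl, hne⟩
      have hDC : D.val ≠ C.val := by
        rintro hval
        have hCD : D = C := Subtype.ext hval
        apply hpair
        rw [ha, hb, hCD]
        rfl
      have hDCc : D.val ≠ C.valᶜ := by
        rintro hval
        have hCD : D = ocompl C := Subtype.ext hval
        apply hpair
        rw [ha, hb, hCD, ocompl_ocompl, Sym2.eq_swap]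
        rfl
      rw [ha, hb]
      exact qside_iff hgen hDC hDCc
  have h1 : Qside C (mkv (ocompl C)) := Or.inl rfl
  exact qside_not_self hgen C ((key _ _ h).mpr h1)

lemma tree_acyclic (hgen : Subgroup.closure (S : Set G) = ⊤) : (TT S).IsAcyclic := by
  rw [SimpleGraph.isAcyclic_iff_forall_adj_isBridge]
  intro u v huv
  obtain ⟨hne, D, rfl, rfl⟩ := huv
  refine SimpleGraph.isBridge_iff.mpr ?_
  exact tree_bridge hgen D

lemma tree_isTree (hgen : Subgroup.closure (S : Set G) = ⊤) (hex : ∃ A, Good S A) :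
    (TT S).IsTree := by
  obtain ⟨A, hA⟩ := opt_exists hex
  haveI : Nonempty (TV S) := ⟨mkv ⟨A, hA⟩⟩
  exact ⟨⟨tree_preconnected hgen⟩, tree_acyclic hgen⟩


/-! ### The action on the structure tree -/

lemma tr_ssubset_iff {g : G} {A B : Set G} : tr g A ⊂ tr g B ↔ A ⊂ B := by
  rw [Set.ssubset_iff_subset_ne, Set.ssubset_iff_subset_ne, tr_subset_iff]
  constructor
  · rintro ⟨h, hne⟩
    exact ⟨h, fun hc => hne (by rw [hc])⟩
  · rintro ⟨h, hne⟩
    exact ⟨h, fun hc => hne (tr_eq_tr_iff.mp hc)⟩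

def trE (g : G) (C : ECut S) : ECut S := ⟨tr g C.val, opt_tr g C.2⟩

lemma trE_ocompl (g : G) (C : ECut S) : trE g (ocompl C) = ocompl (trE g C) :=
  Subtype.ext (tr_compl g C.val)

lemma trE_one (C : ECut S) : trE 1 C = C := Subtype.ext (tr_one C.val)

lemma trE_mul (g h : G) (C : ECut S) : trE (g * h) C = trE g (trE h C) :=
  Subtype.ext (tr_mul g h C.val)

lemma simRel_trE {g : G} {C D : ECut S} (h : SimRel S C D) :
    SimRel S (trE g C) (trE g D) := by
  rcases h with h | ⟨hss, hnb⟩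
  · exact Or.inl (congrArg (tr g) h)
  · refine Or.inr ⟨?_, ?_⟩
    · show tr g C.val ⊂ (tr g D.val)ᶜ
      rw [← tr_compl]
      exact tr_ssubset_iff.mpr hss
    · rintro ⟨E, hEopt, h1, h2⟩
      refine hnb ⟨tr g⁻¹ E, opt_tr g⁻¹ hEopt, ?_, ?_⟩
      · have : tr g⁻¹ (tr g C.val) ⊂ tr g⁻¹ E := tr_ssubset_iff.mpr h1
        rwa [← tr_mul, inv_mul_cancel, tr_one] at this
      · have h2' : E ⊂ tr g (D.valᶜ) := by rwa [tr_compl]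
        have : tr g⁻¹ E ⊂ tr g⁻¹ (tr g D.valᶜ) := tr_ssubset_iff.mpr h2'
        rwa [← tr_mul, inv_mul_cancel, tr_one] at this

lemma eqvGen_map {α : Type*} (f : α → α) (r : α → α → Prop)
    (hf : ∀ x y, r x y → r (f x) (f y)) {x y : α} (h : Relation.EqvGen r x y) :
    Relation.EqvGen r (f x) (f y) := by
  induction h with
  | rel a b hab => exact Relation.EqvGen.rel _ _ (hf a b hab)
  | refl a => exact Relation.EqvGen.refl _
  | symm a b _ ih => exact Relation.EqvGen.symm _ _ ih
  | trans a b c _ _ ih1 ih2 => exact Relation.EqvGen.trans _ _ _ ih1 ih2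

/-- The action of `G` on the vertices of the structure tree. -/
def actT (g : G) : TV S → TV S :=
  Quotient.map (trE g) (fun _ _ h => eqvGen_map (trE g) (SimRel S)
    (fun _ _ h' => simRel_trE h') h)

lemma actT_mk (g : G) (C : ECut S) : actT g (mkv C) = mkv (trE g C) := rfl

lemma actT_one (w : TV S) : actT 1 w = w := by
  induction w using Quotient.inductionOn with
  | _ C =>
    show actT 1 (mkv C) = mkv C
    rw [actT_mk, trE_one]

lemma actT_mul (g h : G) (w : TV S) : actT (g * h) w = actT g (actT h w) := by
  induction w using Quotient.inductionOn with
  | _ C =>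
    show actT (g * h) (mkv C) = actT g (actT h (mkv C))
    rw [actT_mk, actT_mk, actT_mk, trE_mul]

lemma actT_injective (g : G) : Function.Injective (actT (S := S) g) := by
  intro u v h
  have : actT g⁻¹ (actT g u) = actT g⁻¹ (actT g v) := by rw [h]
  rwa [← actT_mul, ← actT_mul, inv_mul_cancel, actT_one, actT_one] at this

lemma actT_adj (g : G) {u v : TV S} (h : (TT S).Adj u v) :
    (TT S).Adj (actT g u) (actT g v) := by
  obtain ⟨hne, C, rfl, rfl⟩ := h
  refine ⟨fun hc => hne (actT_injective g hc), trE g C, rfl, ?_⟩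
  show actT g (mkv (ocompl C)) = mkv (ocompl (trE g C))
  rw [actT_mk, trE_ocompl]

/-! ### Stabilizers -/

lemma stab_pair_finite (hgen : Subgroup.closure (S : Set G) = ⊤) (C : ECut S) :
    {g : G | tr g C.val = C.val ∨ tr g C.val = C.valᶜ}.Finite := by
  classical
  obtain ⟨e, he⟩ := cobound_nonempty hgen (opt_nonempty C.2)
    (opt_compl_infinite C.2).nonempty
  obtain ⟨hedge, u₀, v₀, rfl, hu₀, hv₀⟩ := he
  set EP := endpts (cobound (cayley S) C.val) with hEP
  have hEPfin : EP.Finite := endpts_finite C.2.1.1.2.2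
  have himg : (fun g : G => g * u₀) '' {g : G | tr g C.val = C.val ∨ tr g C.val = C.valᶜ}
      ⊆ EP := by
    rintro x ⟨g, hg, rfl⟩
    have hmem : s(g * u₀, g * v₀) ∈ cobound (cayley S) (tr g C.val) := by
      rw [cobound_tr]
      refine ⟨s(u₀, v₀), ⟨hedge, u₀, v₀, rfl, hu₀, hv₀⟩, ?_⟩
      simp
    have hmem' : s(g * u₀, g * v₀) ∈ cobound (cayley S) C.val := by
      rcases hg with hg | hg
      · rwa [hg] at hmem
      · rw [hg] at hmem
        rwa [cobound_compl] at hmem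
    exact ⟨s(g * u₀, g * v₀), hmem', by simp⟩
  have hinj : Set.InjOn (fun g : G => g * u₀)
      {g : G | tr g C.val = C.val ∨ tr g C.val = C.valᶜ} := by
    intro g1 _ g2 _ h
    exact mul_right_cancel h
  exact Set.Finite.of_finite_image (hEPfin.subset himg) hinj

lemma no_global_fixed (hgen : Subgroup.closure (S : Set G) = ⊤) :
    ¬ ∃ w : TV S, ∀ g : G, actT g w = w := by
  rintro ⟨w, hw⟩
  obtain ⟨C, rfl⟩ := Quotient.exists_rep w
  have key : ∀ g : G, tr g C.val = C.val ∨ tr g C.val ∩ C.val = ∅ := by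
    intro g
    have h : mkv (trE g C) = mkv C := hw g
    rcases (mkv_eq_iff hgen).mp h with hval | ⟨hss, -⟩
    · exact Or.inl hval
    · exact Or.inr (inter_empty_iff.mpr hss.subset)
  obtain ⟨c₀, hc₀⟩ := opt_nonempty C.2
  have hsubset : C.val ⊆ (fun g : G => g * c₀) '' {g : G | tr g C.val = C.val} := by
    intro c hc
    have hgc : (c * c₀⁻¹) * c₀ = c := by group
    have hmem : c ∈ tr (c * c₀⁻¹) C.val := by
      rw [mem_tr]
      have : (c * c₀⁻¹)⁻¹ * c = c₀ := by group
      rw [this]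
      exact hc₀
    rcases key (c * c₀⁻¹) with hg | hg
    · exact ⟨c * c₀⁻¹, hg, hgc⟩
    · exfalso
      have : c ∈ tr (c * c₀⁻¹) C.val ∩ C.val := ⟨hmem, hc⟩
      rw [hg] at this
      exact this
  have hstab : {g : G | tr g C.val = C.val}.Finite :=
    (stab_pair_finite hgen C).subset (fun g hg => Or.inl hg)
  exact opt_val_infinite C.2 ((hstab.image _).subset hsubset)

lemma edge_stab (hgen : Subgroup.closure (S : Set G) = ⊤) (u v : TV S)
    (huv : (TT S).Adj u v) :
    {g : G | (actT g u = u ∧ actT g v = v) ∨ (actT g u = v ∧ actT g v = u)}.Finite := by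
  obtain ⟨hne, C, rfl, rfl⟩ := huv
  refine (stab_pair_finite hgen C).subset ?_
  intro g hg
  simp only [Set.mem_setOf_eq] at hg ⊢
  have hmk1 : actT g (mkv C) = mkv (trE g C) := actT_mk g C
  have hmk2 : actT g (mkv (ocompl C)) = mkv (ocompl (trE g C)) := by
    rw [actT_mk, trE_ocompl]
  rcases hg with ⟨h1, h2⟩ | ⟨h1, h2⟩
  · replace h1 : mkv (trE g C) = mkv C := hmk1 ▸ h1
    replace h2 : mkv (ocompl (trE g C)) = mkv (ocompl C) := hmk2 ▸ h2
    rcases (mkv_eq_iff hgen).mp h1 with hval | ⟨hss1, -⟩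
    · exact Or.inl hval
    · rcases (mkv_eq_iff hgen).mp h2 with hval2 | ⟨hss2, -⟩
      · -- (tr g C)ᶜ = Cᶜ
        refine Or.inl ?_
        have := congrArg compl hval2
        show tr g C.val = C.val
        have h' : (ocompl (trE g C)).val = (ocompl C).val := hval2
        have : (trE g C).valᶜᶜ = C.valᶜᶜ := congrArg compl h'
        rwa [compl_compl, compl_compl] at this
      · -- tr g C ⊂ Cᶜ and (tr g C)ᶜ ⊂ Cᶜᶜ = C, contradiction
        exfalso
        have hss2' : (trE g C).valᶜ ⊂ C.val := by
          have := hss2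
          show (trE g C).valᶜ ⊂ C.val
          rw [show (ocompl C).valᶜ = C.val from compl_compl C.val] at this
          exact this
        have hCA : C.valᶜ ⊂ (trE g C).val := by
          have h0 : (trE g C).valᶜ ⊂ (C.valᶜ)ᶜ := by rwa [compl_compl]
          have h1 : C.valᶜ ⊂ ((trE g C).valᶜ)ᶜ := ssub_compl_comm.mp h0
          rwa [compl_compl] at h1
        exact hCA.ne (subset_antisymm hCA.subset hss1.subset)
  · replace h1 : mkv (trE g C) = mkv (ocompl C) := hmk1 ▸ h1
    replace h2 : mkv (ocompl (trE g C)) = mkv C := hmk2 ▸ h2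
    rcases (mkv_eq_iff hgen).mp h1 with hval | ⟨hss1, -⟩
    · exact Or.inr hval
    · rcases (mkv_eq_iff hgen).mp h2 with hval2 | ⟨hss2, -⟩
      · -- (tr g C)ᶜ = C
        refine Or.inr ?_
        have h' : (trE g C).valᶜ = C.val := hval2
        have := congrArg compl h'
        rw [compl_compl] at this
        exact this.symm ▸ rfl
      · -- tr g C ⊂ C and C ⊂ tr g C
        exfalso
        have hss1' : (trE g C).val ⊂ C.val := by
          have := hss1
          rwa [show (ocompl C).valᶜ = C.val from compl_compl C.val] at this
        have hss2' : C.val ⊂ (trE g C).val := by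
          have h0 : C.val ⊂ ((trE g C).valᶜ)ᶜ := ssub_compl_comm.mp hss2
          rwa [compl_compl] at h0
        exact hss1'.ne (subset_antisymm hss1'.subset hss2'.subset)

end StallingsProof

/-- Stallings: a finitely generated group whose Cayley graph has more than
one end (two rays separated by a cut) acts non-trivially on a tree with finite edge
stabilizers. -/
theorem stallings {G : Type u} [Group G] (S : Finset G)
    (hgen : Subgroup.closure (S : Set G) = ⊤)
    (hends : ∃ A : Set G, IsCut (cayley S) A ∧
      ∃ r r' : ℕ → G, IsRay (cayley S) r ∧ IsRay (cayley S) r' ∧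
        (∃ N, ∀ n ≥ N, r n ∈ A) ∧ (∃ N, ∀ n ≥ N, r' n ∉ A)) :
    ∃ (W : Type u) (T : SimpleGraph W) (act : G → W → W),
      T.IsTree ∧
      (∀ w, act 1 w = w) ∧
      (∀ g h w, act (g * h) w = act g (act h w)) ∧
      (∀ g u v, T.Adj u v → T.Adj (act g u) (act g v)) ∧
      (¬ ∃ w : W, ∀ g : G, act g w = w) ∧
      (∀ u v : W, T.Adj u v →
        {g : G | (act g u = u ∧ act g v = v) ∨ (act g u = v ∧ act g v = u)}.Finite) := by
  classical
  obtain ⟨A, hcut, r, r', hr, hr', ⟨N, hN⟩, ⟨N', hN'⟩⟩ := hends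
  have hAinf : A.Infinite := by
    have h1 : (r '' Set.Ici N).Infinite :=
      (Set.Ici_infinite N).image (Set.injOn_of_injective hr.inj)
    refine h1.mono ?_
    rintro x ⟨n, hn, rfl⟩
    exact hN n hn
  have hAcinf : Aᶜ.Infinite := by
    have h1 : (r' '' Set.Ici N').Infinite :=
      (Set.Ici_infinite N').image (Set.injOn_of_injective hr'.inj)
    refine h1.mono ?_
    rintro x ⟨n, hn, rfl⟩
    exact hN' n hn
  have hex : ∃ Y, StallingsProof.Good S Y := ⟨A, hAinf, hAcinf, hcut⟩
  exact ⟨StallingsProof.TV S, StallingsProof.TT S, fun g => StallingsProof.actT g,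
    StallingsProof.tree_isTree hgen hex, StallingsProof.actT_one,
    StallingsProof.actT_mul, fun g u v h => StallingsProof.actT_adj g h,
    StallingsProof.no_global_fixed hgen, StallingsProof.edge_stab hgen⟩
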